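/- arXiv:1705.04735 — 2 statements merged into one kernel-verified Lean document; each statement's English description precedes it below -/
import Mathlib

section
/- For any graph G and any noncomplete graph H, γ_r(G∘H) ≤ γ(G)·γ_r(H). -/
open Finset
open scoped Classical

/-- The lexicographic product of two simple graphs. -/
def lexProd {α β : Type*} (G : SimpleGraph α) (H : SimpleGraph β) :
    SimpleGraph (α × β) where
  Adj p q := G.Adj p.1 q.1 ∨ (p.1 = q.1 ∧ H.Adj p.2 q.2)
  symm := by
    constructor
    rintro ⟨a, b⟩ ⟨c, d⟩ (h | ⟨h1, h2⟩)
    · exact Or.inl h.symm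
    · exact Or.inr ⟨h1.symm, h2.symm⟩
  loopless := by
    constructor
    rintro ⟨a, b⟩ (h | ⟨h1, h2⟩)
    · exact G.loopless.irrefl a h
    · exact H.loopless.irrefl b h2

/-- A vertex `w` is undefended with respect to `g` if `g w = 0` and `g x = 0`
for every neighbour `x` of `w`. -/
def Undefended {α : Type*} (G : SimpleGraph α) (g : α → ℕ) (w : α) : Prop :=
  g w = 0 ∧ ∀ x, G.Adj w x → g x = 0

/-- A weak Roman dominating function. -/
def IsWRDF {α : Type*} (G : SimpleGraph α) (f : α → ℕ) : Prop :=
  (∀ v, f v ≤ 2) ∧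
    ∀ v, f v = 0 → ∃ u, G.Adj u v ∧ 1 ≤ f u ∧
      ∀ w, ¬ Undefended G (Function.update (Function.update f v 1) u (f u - 1)) w

/-- The weak Roman domination number. -/
noncomputable def weakRomanNumber {α : Type*} (G : SimpleGraph α) [Fintype α] : ℕ :=
  sInf {k | ∃ f : α → ℕ, IsWRDF G f ∧ ∑ v, f v = k}

/-- A dominating set. -/
def IsDomSet {α : Type*} (G : SimpleGraph α) (D : Finset α) : Prop :=
  ∀ v ∉ D, ∃ u ∈ D, G.Adj u v

/-- The domination number. -/
noncomputable def domNumber {α : Type*} (G : SimpleGraph α) [Fintype α] : ℕ :=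
  sInf {k | ∃ D : Finset α, IsDomSet G D ∧ D.card = k}

/-- A total dominating set. -/
def IsTotalDomSet {α : Type*} (G : SimpleGraph α) (S : Finset α) : Prop :=
  ∀ v, ∃ u ∈ S, G.Adj u v

/-- The total domination number. -/
noncomputable def totalDomNumber {α : Type*} (G : SimpleGraph α) [Fintype α] : ℕ :=
  sInf {k | ∃ S : Finset α, IsTotalDomSet G S ∧ S.card = k}

/-- A double total dominating set: every vertex has at least two neighbours in `S`. -/
def IsDoubleTotalDomSet {α : Type*} (G : SimpleGraph α) (S : Finset α) : Prop :=
  ∀ v, ∃ u₁ ∈ S, ∃ u₂ ∈ S, u₁ ≠ u₂ ∧ G.Adj u₁ v ∧ G.Adj u₂ v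

/-- The double total domination number. -/
noncomputable def doubleTotalDomNumber {α : Type*} (G : SimpleGraph α) [Fintype α] : ℕ :=
  sInf {k | ∃ S : Finset α, IsDoubleTotalDomSet G S ∧ S.card = k}

/-- A 2-packing: the closed neighbourhoods of distinct members are disjoint. -/
def IsTwoPacking {α : Type*} (G : SimpleGraph α) (X : Finset α) : Prop :=
  ∀ u ∈ X, ∀ v ∈ X, u ≠ v →
    ∀ w, ¬ ((w = u ∨ G.Adj u w) ∧ (w = v ∨ G.Adj v w))

/-- The 2-packing number. -/
noncomputable def twoPackingNumber {α : Type*} (G : SimpleGraph α) [Fintype α] : ℕ :=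
  sSup {k | ∃ X : Finset α, IsTwoPacking G X ∧ X.card = k}

/-- A secure dominating set. -/
def IsSecureDomSet {α : Type*} (G : SimpleGraph α) (S : Finset α) : Prop :=
  IsDomSet G S ∧ ∀ v ∉ S, ∃ u ∈ S, G.Adj u v ∧ IsDomSet G (insert v (S.erase u))

/-- The secure domination number. -/
noncomputable def secureDomNumber {α : Type*} (G : SimpleGraph α) [Fintype α] : ℕ :=
  sInf {k | ∃ S : Finset α, IsSecureDomSet G S ∧ S.card = k}

/-- The corona product of two graphs. -/
def corona {α β : Type*} (G₁ : SimpleGraph α) (G₂ : SimpleGraph β) :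
    SimpleGraph (α ⊕ α × β) where
  Adj x y :=
    match x, y with
    | .inl a, .inl a' => G₁.Adj a a'
    | .inl a, .inr p => a = p.1
    | .inr p, .inl a => p.1 = a
    | .inr p, .inr q => p.1 = q.1 ∧ G₂.Adj p.2 q.2
  symm := by
    constructor
    rintro (a | p) (a' | q) h
    · exact G₁.adj_symm h
    · exact h.symm
    · exact h.symm
    · exact ⟨h.1.symm, G₂.adj_symm h.2⟩
  loopless := by
    constructor
    rintro (a | p) h
    · exact G₁.loopless.irrefl a h
    · exact G₂.loopless.irrefl p.2 h.2


/-- Auxiliary: any WRDF on a noncomplete graph has weight at least 2. -/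
lemma wrdf_sum_ge_two {β : Type*} [Fintype β] (H : SimpleGraph β)
    (hH : ∃ a b : β, a ≠ b ∧ ¬ H.Adj a b) (f : β → ℕ) (hf : IsWRDF H f) :
    2 ≤ ∑ v, f v := by
  classical
  obtain ⟨a, b, hab, hnadj⟩ := hH
  by_contra hlt
  push_neg at hlt
  have hs : ∑ v, f v = 0 ∨ ∑ v, f v = 1 := by omega
  rcases hs with h0 | h1
  · have hz : ∀ v, f v = 0 := fun v =>
      Finset.sum_eq_zero_iff.mp h0 v (Finset.mem_univ v)
    obtain ⟨u, _, hu1, _⟩ := hf.2 a (hz a)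
    rw [hz u] at hu1; omega
  · obtain ⟨y, hy⟩ : ∃ y, f y ≠ 0 := by
      by_contra hc; push_neg at hc
      rw [Finset.sum_eq_zero (fun v _ => hc v)] at h1; omega
    have hzero : ∀ z, z ≠ y → f z = 0 := by
      intro z hz
      have h := Finset.add_sum_erase Finset.univ f (Finset.mem_univ y)
      have hz' : f z ≤ ∑ x ∈ Finset.univ.erase y, f x :=
        Finset.single_le_sum (fun _ _ => Nat.zero_le _)
          (Finset.mem_erase.mpr ⟨hz, Finset.mem_univ z⟩)
      omega
    have hy1 : f y = 1 := by
      have hle : f y ≤ ∑ v, f v :=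
        Finset.single_le_sum (fun _ _ => Nat.zero_le _) (Finset.mem_univ y)
      omega
    by_cases hya : y = a
    · have hfb : f b = 0 := hzero b (by rw [hya]; exact fun h => hab h.symm)
      obtain ⟨u, huadj, hu1, _⟩ := hf.2 b hfb
      have hu : u = y := by
        by_contra hc; rw [hzero u hc] at hu1; omega
      rw [hu, hya] at huadj
      exact hnadj huadj
    · by_cases hyb : y = b
      · have hfa : f a = 0 := hzero a (fun h => hya h.symm)
        obtain ⟨u, huadj, hu1, _⟩ := hf.2 a hfa
        have hu : u = y := by
          by_contra hc; rw [hzero u hc] at hu1; omega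
        rw [hu, hyb] at huadj
        exact hnadj (H.adj_symm huadj)
      · have hfa : f a = 0 := hzero a (fun h => hya h.symm)
        obtain ⟨u, huadj, hu1, hnone⟩ := hf.2 a hfa
        have hu : u = y := by
          by_contra hc; rw [hzero u hc] at hu1; omega
        subst hu
        refine hnone b ⟨?_, ?_⟩
        · rw [Function.update_of_ne (fun h : b = u => hyb h.symm),
            Function.update_of_ne (fun h : b = a => hab h.symm)]
          exact hzero b (fun h => hyb h.symm)
        · intro x hxadj
          by_cases hxy : x = u
          · subst hxy; rw [Function.update_self]; omega
          · rw [Function.update_of_ne hxy]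
            by_cases hxa : x = a
            · exfalso; subst hxa; exact hnadj (H.adj_symm hxadj)
            · rw [Function.update_of_ne hxa]; exact hzero x hxy

/-- Value of a double update. -/
lemma upd_val {γ : Type*} [DecidableEq γ] (F : γ → ℕ) (p q : γ) (a b : ℕ) (r : γ) :
    Function.update (Function.update F p a) q b r =
      if r = q then b else if r = p then a else F r := by
  by_cases h1 : r = q
  · subst h1; rw [Function.update_self, if_pos rfl]
  · rw [Function.update_of_ne h1, if_neg h1]
    by_cases h2 : r = p
    · subst h2; rw [Function.update_self, if_pos rfl]
    · rw [Function.update_of_ne h2, if_neg h2]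

/-- For any graph `G` and any noncomplete graph `H`,
`γ_r(G∘H) ≤ γ(G)·γ_r(H)`. -/
theorem weakRoman_lexProd_le_dom_mul_weakRoman {α β : Type*} [Fintype α] [Fintype β]
    (G : SimpleGraph α) (H : SimpleGraph β)
    (hH : ∃ a b : β, a ≠ b ∧ ¬ H.Adj a b) :
    weakRomanNumber (lexProd G H) ≤ domNumber G * weakRomanNumber H := by
  classical
  have hDne : Set.Nonempty {k | ∃ D : Finset α, IsDomSet G D ∧ D.card = k} :=
    ⟨Finset.univ.card, Finset.univ, fun v hv => absurd (Finset.mem_univ v) hv, rfl⟩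
  obtain ⟨D, hD, hDcard⟩ := Nat.sInf_mem hDne
  replace hDcard : D.card = domNumber G := hDcard
  have hfne : Set.Nonempty {k | ∃ f : β → ℕ, IsWRDF H f ∧ ∑ v, f v = k} :=
    ⟨∑ _v : β, 1, fun _ => 1,
      ⟨fun _ => one_le_two, fun v h => absurd h one_ne_zero⟩, rfl⟩
  obtain ⟨f, hf, hfsum⟩ := Nat.sInf_mem hfne
  replace hfsum : ∑ v, f v = weakRomanNumber H := hfsum
  clear hDne hfne
  have h2 : 2 ≤ ∑ v, f v := wrdf_sum_ge_two H hH f hf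
  have hfle := hf.1
  have hfdef := hf.2
  have hpos : ∃ y, 1 ≤ f y := by
    by_contra h; push_neg at h
    have : ∑ v, f v = 0 := Finset.sum_eq_zero (fun v _ => by have := h v; omega)
    omega
  have hdec : ∀ y : β, ∃ y' : β, (y' ≠ y ∧ 1 ≤ f y') ∨ (y' = y ∧ 2 ≤ f y) := by
    intro y
    by_cases h2y : 2 ≤ f y
    · exact ⟨y, Or.inr ⟨rfl, h2y⟩⟩
    · have hsum := Finset.add_sum_erase Finset.univ f (Finset.mem_univ y)
      have hpos' : ∃ y' ∈ Finset.univ.erase y, f y' ≠ 0 := by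
        by_contra hc; push_neg at hc
        have := Finset.sum_eq_zero hc
        omega
      obtain ⟨y', hy'mem, hy'⟩ := hpos'
      exact ⟨y', Or.inl ⟨Finset.ne_of_mem_erase hy'mem, by omega⟩⟩
  set F : α × β → ℕ := fun p => if p.1 ∈ D then f p.2 else 0 with hFdef
  have hF : IsWRDF (lexProd G H) F := by
    constructor
    · intro p
      by_cases h : p.1 ∈ D
      · simpa [hFdef, h] using hfle p.2
      · simp [hFdef, h]
    · rintro ⟨u, v⟩ huv0
      by_cases hu : u ∈ D
      · -- Case 2 : u ∈ D
        have hfv : f v = 0 := by simpa [hFdef, hu] using huv0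
        obtain ⟨y, hyadj, hy1, hynone⟩ := hfdef v hfv
        have hyv : y ≠ v := fun h => H.loopless.irrefl v (h ▸ hyadj)
        refine ⟨(u, y), Or.inr ⟨rfl, hyadj⟩, by simpa [hFdef, hu] using hy1, ?_⟩
        set g := Function.update (Function.update f v 1) y (f y - 1) with hg
        rintro ⟨w, z⟩ hund
        obtain ⟨h0, hall⟩ := hund
        simp only [upd_val] at h0 hall
        by_cases hw : w = u
        · subst hw
          have hgz : g z = 0 := by
            by_cases hzy : z = y
            · subst hzy
              rw [if_pos rfl] at h0
              rw [hg, Function.update_self]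
              simpa [hFdef, hu] using h0
            · by_cases hzv : z = v
              · subst hzv
                rw [if_neg (by simp [Prod.mk.injEq, hzy]), if_pos rfl] at h0
                exact absurd h0 one_ne_zero
              · rw [if_neg (by simp [Prod.mk.injEq, hzy]),
                  if_neg (by simp [Prod.mk.injEq, hzv])] at h0
                rw [hg, Function.update_of_ne hzy, Function.update_of_ne hzv]
                simpa [hFdef, hu] using h0
          have hnz := hynone z
          unfold Undefended at hnz
          push_neg at hnz
          obtain ⟨xx, hxxadj, hxx⟩ := hnz hgz
          apply hxx
          have h := hall (w, xx) (Or.inr ⟨rfl, hxxadj⟩)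
          by_cases hxy : xx = y
          · subst hxy
            rw [if_pos rfl] at h
            rw [hg, Function.update_self]
            simpa [hFdef, hu] using h
          · by_cases hxv : xx = v
            · subst hxv
              rw [if_neg (by simp [Prod.mk.injEq, hxy]), if_pos rfl] at h
              exact absurd h one_ne_zero
            · rw [if_neg (by simp [Prod.mk.injEq, hxy]),
                if_neg (by simp [Prod.mk.injEq, hxv])] at h
              rw [hg, Function.update_of_ne hxy, Function.update_of_ne hxv]
              simpa [hFdef, hu] using h
        · rw [if_neg (by simp [Prod.mk.injEq, hw]),
            if_neg (by simp [Prod.mk.injEq, hw])] at h0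
          by_cases hwD : w ∈ D
          · have hfz : f z = 0 := by simpa [hFdef, hwD] using h0
            obtain ⟨u', hu'adj, hu'1, _⟩ := hfdef z hfz
            have h := hall (w, u') (Or.inr ⟨rfl, H.adj_symm hu'adj⟩)
            rw [if_neg (by simp [Prod.mk.injEq, hw]),
              if_neg (by simp [Prod.mk.injEq, hw])] at h
            simp [hFdef, hwD] at h
            omega
          · obtain ⟨x', hx'D, hx'w⟩ := hD w hwD
            by_cases hx'u : x' = u
            · have h := hall (u, v)
                (Or.inl (G.adj_symm (show G.Adj u w by rw [← hx'u]; exact hx'w)))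
              rw [if_neg (by simp [Prod.mk.injEq, Ne.symm hyv]), if_pos rfl] at h
              exact absurd h one_ne_zero
            · obtain ⟨y0, hy0⟩ := hpos
              have h := hall (x', y0) (Or.inl (G.adj_symm hx'w))
              rw [if_neg (by simp [Prod.mk.injEq, hx'u]),
                if_neg (by simp [Prod.mk.injEq, hx'u])] at h
              simp [hFdef, hx'D] at h
              omega
      · -- Case 1 : u ∉ D
        obtain ⟨x, hxD, hxu⟩ := hD u hu
        obtain ⟨y, hy1⟩ := hpos
        have hxyne : ((x, y) : α × β) ≠ (u, v) := by
          intro h; rw [Prod.mk.injEq] at h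
          exact hu (h.1 ▸ hxD)
        refine ⟨(x, y), Or.inl hxu, by simpa [hFdef, hxD] using hy1, ?_⟩
        obtain ⟨y', hy'⟩ := hdec y
        have hneu : ∀ x'' ∈ D, x'' ≠ u := fun x'' hx'' hh => hu (hh ▸ hx'')
        rintro ⟨w, z⟩ hund
        obtain ⟨h0, hall⟩ := hund
        simp only [upd_val] at h0 hall
        by_cases hwu : w = u
        · subst hwu
          have h := hall (x, y') (Or.inl (G.adj_symm hxu))
          rcases hy' with ⟨hne', h1⟩ | ⟨heq, hge2⟩
          · rw [if_neg (by simp [Prod.mk.injEq, hne']),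
              if_neg (by simp [Prod.mk.injEq, hneu x hxD])] at h
            simp [hFdef, hxD] at h
            omega
          · rw [if_pos (by rw [heq])] at h
            simp [hFdef, hxD] at h
            omega
        · by_cases hwD : w ∈ D
          · by_cases hwz : ((w, z) : α × β) = (x, y)
            · have h := hall (u, v) (by rw [hwz]; exact Or.inl hxu)
              rw [if_neg (Ne.symm hxyne), if_pos rfl] at h
              exact absurd h one_ne_zero
            · rw [if_neg hwz, if_neg (by simp [Prod.mk.injEq, hwu])] at h0
              have hfz : f z = 0 := by simpa [hFdef, hwD] using h0
              obtain ⟨u', hu'adj, hu'1, _⟩ := hfdef z hfz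
              have h := hall (w, u') (Or.inr ⟨rfl, H.adj_symm hu'adj⟩)
              by_cases hc : ((w, u') : α × β) = (x, y)
              · have hwx : w = x := by rw [Prod.mk.injEq] at hc; exact hc.1
                have h2' := hall (u, v)
                  (Or.inl (show G.Adj w u by rw [hwx]; exact hxu))
                rw [if_neg (Ne.symm hxyne), if_pos rfl] at h2'
                exact absurd h2' one_ne_zero
              · rw [if_neg hc, if_neg (by simp [Prod.mk.injEq, hwu])] at h
                simp [hFdef, hwD] at h
                omega
          · obtain ⟨x', hx'D, hx'w⟩ := hD w hwD
            have h := hall (x', y') (Or.inl (G.adj_symm hx'w))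
            rcases hy' with ⟨hne', h1⟩ | ⟨heq, hge2⟩
            · rw [if_neg (by simp [Prod.mk.injEq, hne']),
                if_neg (by simp [Prod.mk.injEq, hneu x' hx'D])] at h
              simp [hFdef, hx'D] at h
              omega
            · rw [heq] at h
              by_cases hxx : x' = x
              · rw [if_pos (by rw [hxx])] at h
                simp [hFdef, hxD] at h
                omega
              · rw [if_neg (by simp [Prod.mk.injEq, hxx]),
                  if_neg (by simp [Prod.mk.injEq, hneu x' hx'D])] at h
                simp [hFdef, hx'D] at h
                omega
  have hle : weakRomanNumber (lexProd G H) ≤ ∑ p : α × β, F p :=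
    Nat.sInf_le ⟨F, hF, rfl⟩
  have hsum : ∑ p : α × β, F p = D.card * ∑ v, f v := by
    rw [Fintype.sum_prod_type]
    calc ∑ u : α, ∑ v : β, F (u, v)
        = ∑ u : α, (if u ∈ D then ∑ v, f v else 0) := by
          refine Finset.sum_congr rfl fun u _ => ?_
          by_cases h : u ∈ D <;> simp [hFdef, h]
      _ = ∑ _u ∈ D, ∑ v, f v := by
          rw [Finset.sum_ite_mem, Finset.univ_inter]
      _ = D.card * ∑ v, f v := by
          rw [Finset.sum_const, smul_eq_mul]
  rw [hsum, hDcard, hfsum] at hle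
  exact hle
end

section
/- For any connected graph G of order n ≥ 3 and any graph H, γ_r(G∘H) ≤ 2·⌊2n/3⌋. -/
open Finset
open scoped Classical

section TotalDomination

variable {α : Type*}

/-- Auxiliary induction: given a rooted "spanning tree" structure (a parent function `par`
and a depth function `dep` decreasing along parents) on a finite set `A` with at least 3
elements, there is a set `S ⊆ A` that totally dominates `A` through tree edges, with
`3|S| ≤ 2|A|`. -/
lemma tds_aux [DecidableEq α] (r : α) (par : α → α) (dep : α → ℕ) (hdepr : dep r = 0) :
    ∀ N (A : Finset α), A.card ≤ N → r ∈ A →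
      (∀ v ∈ A, v ≠ r → par v ∈ A ∧ dep v = dep (par v) + 1) → 3 ≤ A.card →
      ∃ S : Finset α, S ⊆ A ∧
        (∀ v ∈ A, ∃ u ∈ S, ((v ≠ r ∧ u = par v) ∨ (u ≠ r ∧ v = par u))) ∧
        3 * S.card ≤ 2 * A.card := by
  intro N
  induction N with
  | zero => intro A hA _ _ h3; omega
  | succ N ih =>
    intro A hcard hr H1 h3
    obtain ⟨v, hvA, hmax⟩ := A.exists_max_image dep ⟨r, hr⟩
    by_cases hd : 2 ≤ dep v
    · -- deep case
      have hdne : ∀ a b : α, dep a ≠ dep b → a ≠ b := fun a b hab h => hab (by rw [h])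
      have hvr : v ≠ r := by intro h; rw [h, hdepr] at hd; omega
      obtain ⟨huA, hdv⟩ := H1 v hvA hvr
      set u := par v with hu
      have hur : u ≠ r := by intro h; rw [h, hdepr] at hdv; omega
      obtain ⟨hwA, hdu⟩ := H1 u huA hur
      set w := par u with hw
      have hvu : v ≠ u := hdne v u (by omega)
      have hvw : v ≠ w := hdne v w (by omega)
      have huw : u ≠ w := hdne u w (by omega)
      by_cases hsib : ∃ z ∈ A, ∃ z' ∈ A, z ≠ r ∧ z' ≠ r ∧ z ≠ z' ∧ par z = par z' ∧
          dep z = dep v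
      · -- case (a): a deepest vertex with a sibling; delete it
        obtain ⟨z, hzA, z', hz'A, hzr, hz'r, hzz', hpp, hdz⟩ := hsib
        obtain ⟨hPA, hdzP⟩ := H1 z hzA hzr
        obtain ⟨_, hdz'0⟩ := H1 z' hz'A hz'r
        have hdepz' : dep z' = dep v := by rw [hdz'0, ← hpp, ← hdzP, hdz]
        have hzP : z ≠ par z := by intro h; rw [← h] at hdzP; omega
        have hz'P : z' ≠ par z := by
          intro h; rw [h] at hdepz'; omega
        have hPr : par z ≠ r := by intro h; rw [h, hdepr] at hdzP; omega
        set A' := A.erase z with hA'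
        have hrA' : r ∈ A' := Finset.mem_erase.2 ⟨Ne.symm hzr, hr⟩
        have H1' : ∀ y ∈ A', y ≠ r → par y ∈ A' ∧ dep y = dep (par y) + 1 := by
          intro y hyA' hyr
          have hyA := Finset.mem_of_mem_erase hyA'
          obtain ⟨h1, h2⟩ := H1 y hyA hyr
          refine ⟨Finset.mem_erase.2 ⟨?_, h1⟩, h2⟩
          intro hpz; rw [hpz] at h2
          have := hmax y hyA; omega
        have hcA' : A'.card = A.card - 1 := Finset.card_erase_of_mem hzA
        have hc4 : ({z, z', par z, r} : Finset α).card = 4 := by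
          rw [Finset.card_insert_of_notMem (by simp [hzz', hzP, hzr]),
            Finset.card_insert_of_notMem (by simp [hz'P, hz'r]),
            Finset.card_insert_of_notMem (by simp [hPr]), Finset.card_singleton]
        have h4 : 4 ≤ A.card := by
          have hsub : ({z, z', par z, r} : Finset α) ⊆ A := by
            intro t ht; simp only [Finset.mem_insert, Finset.mem_singleton] at ht
            rcases ht with rfl | rfl | rfl | rfl
            exacts [hzA, hz'A, hPA, hr]
          exact hc4 ▸ Finset.card_le_card hsub
        obtain ⟨S', hS'sub, hS'dom, hS'b⟩ := ih A' (by omega) hrA' H1' (by omega)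
        obtain ⟨s, hsS', hts⟩ := hS'dom z' (Finset.mem_erase.2 ⟨Ne.symm hzz', hz'A⟩)
        rcases hts with ⟨_, hs1⟩ | ⟨hsr, hs2⟩
        · refine ⟨S', fun t ht => Finset.mem_of_mem_erase (hS'sub ht), ?_, by omega⟩
          intro t htA
          by_cases htz : t = z
          · subst htz; exact ⟨s, hsS', Or.inl ⟨hzr, by rw [hs1, hpp]⟩⟩
          · exact hS'dom t (Finset.mem_erase.2 ⟨htz, htA⟩)
        · exfalso
          have hsA : s ∈ A := Finset.mem_of_mem_erase (hS'sub hsS')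
          obtain ⟨_, h2⟩ := H1 s hsA hsr
          rw [← hs2] at h2
          have := hmax s hsA; omega
      · push_neg at hsib
        have hchild_u : ∀ c ∈ A, c ≠ r → par c = u → c = v := by
          intro c hc hcr hpc
          by_contra hne
          obtain ⟨_, h2⟩ := H1 c hc hcr
          exact hsib c hc v hvA hcr hvr hne (hpc.trans hu)
            (show dep c = dep v by rw [h2, hpc]; omega)
        by_cases honly : ∀ x ∈ A, x ≠ r → par x = w → x = u
        · -- case (b-iii): u is the only child of w
          by_cases hwr : w = r
          · -- whole graph is the path v-u-w
            have key : ∀ m, ∀ t ∈ A, dep t ≤ m → (t = v ∨ t = u ∨ t = r) := by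
              intro m
              induction m with
              | zero =>
                intro t ht hdt
                by_cases htr : t = r
                · exact Or.inr (Or.inr htr)
                · obtain ⟨_, h2⟩ := H1 t ht htr; omega
              | succ m ihm =>
                intro t ht hdt
                by_cases htr : t = r
                · exact Or.inr (Or.inr htr)
                · obtain ⟨h1, h2⟩ := H1 t ht htr
                  have hpt : dep (par t) ≤ m := by omega
                  rcases ihm (par t) h1 hpt with h | h | h
                  · exfalso; rw [h] at h2; have := hmax t ht; omega
                  · exact Or.inl (hchild_u t ht htr h)
                  · exact Or.inr (Or.inl (honly t ht htr (h.trans hwr.symm)))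
            refine ⟨{u, w}, ?_, ?_, ?_⟩
            · intro t ht; simp only [Finset.mem_insert, Finset.mem_singleton] at ht
              rcases ht with rfl | rfl; exacts [huA, hwA]
            · intro t htA
              rcases key (dep t) t htA le_rfl with h | h | h
              · subst h; exact ⟨u, by simp, Or.inl ⟨hvr, hu⟩⟩
              · subst h; exact ⟨w, by simp, Or.inl ⟨hur, hw⟩⟩
              · subst h; exact ⟨u, by simp, Or.inr ⟨hur, by rw [← hwr]⟩⟩
            · have : ({u, w} : Finset α).card ≤ 2 :=
                (Finset.card_insert_le _ _).trans (by simp)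
              omega
          · -- w ≠ r : delete v, u, w
            obtain ⟨hpA, hdw⟩ := H1 w hwA hwr
            set p := par w with hp
            set A' := ((A.erase v).erase u).erase w with hA'
            have hmemA' : ∀ t, t ∈ A' ↔ (t ∈ A ∧ t ≠ v ∧ t ≠ u ∧ t ≠ w) := by
              intro t; simp only [hA', Finset.mem_erase]; tauto
            have hrA' : r ∈ A' :=
              (hmemA' r).2 ⟨hr, Ne.symm hvr, Ne.symm hur, Ne.symm hwr⟩
            have hpv : p ≠ v := hdne p v (by omega)
            have hpu : p ≠ u := hdne p u (by omega)
            have hpw : p ≠ w := hdne p w (by omega)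
            have hpA' : p ∈ A' := (hmemA' p).2 ⟨hpA, hpv, hpu, hpw⟩
            have H1' : ∀ y ∈ A', y ≠ r → par y ∈ A' ∧ dep y = dep (par y) + 1 := by
              intro y hyA' hyr
              obtain ⟨hyA, hyv, hyu, hyw⟩ := (hmemA' y).1 hyA'
              obtain ⟨h1, h2⟩ := H1 y hyA hyr
              refine ⟨(hmemA' _).2 ⟨h1, ?_, ?_, ?_⟩, h2⟩
              · intro hq; rw [hq] at h2; have := hmax y hyA; omega
              · intro hq; exact hyv (hchild_u y hyA hyr hq)
              · intro hq; exact hyu (honly y hyA hyr hq)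
            have hc1 : (A.erase v).card = A.card - 1 := Finset.card_erase_of_mem hvA
            have hc2 : ((A.erase v).erase u).card = A.card - 2 := by
              rw [Finset.card_erase_of_mem (Finset.mem_erase.2 ⟨Ne.symm hvu, huA⟩)]; omega
            have hcA' : A'.card = A.card - 3 := by
              rw [hA', Finset.card_erase_of_mem (Finset.mem_erase.2
                ⟨Ne.symm huw, Finset.mem_erase.2 ⟨Ne.symm hvw, hwA⟩⟩)]
              omega
            by_cases h3' : 3 ≤ A'.card
            · obtain ⟨S', hS'sub, hS'dom, hS'b⟩ := ih A' (by omega) hrA' H1' h3'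
              refine ⟨insert u (insert w S'), ?_, ?_, ?_⟩
              · intro t ht
                rcases Finset.mem_insert.1 ht with rfl | ht; · exact huA
                rcases Finset.mem_insert.1 ht with rfl | ht; · exact hwA
                exact ((hmemA' t).1 (hS'sub ht)).1
              · intro t htA
                by_cases e1 : t = v
                · subst e1; exact ⟨u, by simp, Or.inl ⟨hvr, hu⟩⟩
                by_cases e2 : t = u
                · subst e2; exact ⟨w, by simp, Or.inl ⟨hur, hw⟩⟩
                by_cases e3 : t = w
                · subst e3; exact ⟨u, by simp, Or.inr ⟨hur, hw⟩⟩
                obtain ⟨s, hs, hts⟩ := hS'dom t ((hmemA' t).2 ⟨htA, e1, e2, e3⟩)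
                exact ⟨s, Finset.mem_insert_of_mem (Finset.mem_insert_of_mem hs), hts⟩
              · have hb1 : (insert u (insert w S')).card ≤ S'.card + 2 := by
                  have := Finset.card_insert_le u (insert w S')
                  have := Finset.card_insert_le w S'
                  omega
                omega
            · -- small leftover
              by_cases hc1' : A'.card = 1
              · obtain ⟨a, ha⟩ := Finset.card_eq_one.1 hc1'
                have hA'eq : A' = {p} := by
                  rw [ha]; rw [ha] at hpA'
                  simp only [Finset.mem_singleton] at hpA'; rw [hpA']
                have hpr : p = r := by
                  by_contra hpr
                  obtain ⟨hq1, _⟩ := H1' p hpA' hpr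
                  rw [hA'eq, Finset.mem_singleton] at hq1
                  obtain ⟨_, hq2⟩ := H1 p hpA hpr
                  rw [hq1] at hq2; omega
                refine ⟨{u, w}, ?_, ?_, ?_⟩
                · intro t ht; simp only [Finset.mem_insert, Finset.mem_singleton] at ht
                  rcases ht with rfl | rfl; exacts [huA, hwA]
                · intro t htA
                  by_cases e1 : t = v
                  · subst e1; exact ⟨u, by simp, Or.inl ⟨hvr, hu⟩⟩
                  by_cases e2 : t = u
                  · subst e2; exact ⟨w, by simp, Or.inl ⟨hur, hw⟩⟩
                  by_cases e3 : t = w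
                  · subst e3; exact ⟨u, by simp, Or.inr ⟨hur, hw⟩⟩
                  have ht' : t ∈ A' := (hmemA' t).2 ⟨htA, e1, e2, e3⟩
                  rw [hA'eq, Finset.mem_singleton] at ht'
                  subst ht'
                  exact ⟨w, by simp, Or.inr ⟨hwr, hp⟩⟩
                · have : ({u, w} : Finset α).card ≤ 2 :=
                    (Finset.card_insert_le _ _).trans (by simp)
                  omega
              · have hA'1 : 1 ≤ A'.card := Finset.card_pos.2 ⟨p, hpA'⟩
                have hc2' : A'.card = 2 := by omega
                have hce : (A'.erase p).card = 1 := by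
                  rw [Finset.card_erase_of_mem hpA']; omega
                obtain ⟨q, hq⟩ := Finset.card_eq_one.1 hce
                have hqA' : q ∈ A' :=
                  Finset.mem_of_mem_erase (hq ▸ Finset.mem_singleton_self q)
                have hqp : q ≠ p :=
                  (Finset.mem_erase.1 (hq ▸ Finset.mem_singleton_self q)).1
                have hA'eq : A' = {p, q} := by
                  refine (Finset.eq_of_subset_of_card_le ?_ ?_).symm
                  · intro t ht; simp only [Finset.mem_insert, Finset.mem_singleton] at ht
                    rcases ht with rfl | rfl; exacts [hpA', hqA']
                  · rw [Finset.card_insert_of_notMem (by simp [Ne.symm hqp]),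
                      Finset.card_singleton]; omega
                have hTpq : (q ≠ r ∧ p = par q) ∨ (p ≠ r ∧ q = par p) := by
                  by_cases hqr : q = r
                  · have hpr : p ≠ r := by rw [← hqr]; exact Ne.symm hqp
                    refine Or.inr ⟨hpr, ?_⟩
                    obtain ⟨hq1, hq2⟩ := H1' p hpA' hpr
                    rw [hA'eq] at hq1
                    simp only [Finset.mem_insert, Finset.mem_singleton] at hq1
                    rcases hq1 with h | h
                    · exfalso; rw [h] at hq2; omega
                    · exact h.symm
                  · refine Or.inl ⟨hqr, ?_⟩
                    obtain ⟨hq1, hq2⟩ := H1' q hqA' hqr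
                    rw [hA'eq] at hq1
                    simp only [Finset.mem_insert, Finset.mem_singleton] at hq1
                    rcases hq1 with h | h
                    · exact h.symm
                    · exfalso; rw [h] at hq2; omega
                refine ⟨insert p {u, w}, ?_, ?_, ?_⟩
                · intro t ht
                  simp only [Finset.mem_insert, Finset.mem_singleton] at ht
                  rcases ht with rfl | rfl | rfl; exacts [hpA, huA, hwA]
                · intro t htA
                  by_cases e1 : t = v
                  · subst e1; exact ⟨u, by simp, Or.inl ⟨hvr, hu⟩⟩
                  by_cases e2 : t = u
                  · subst e2; exact ⟨w, by simp, Or.inl ⟨hur, hw⟩⟩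
                  by_cases e3 : t = w
                  · subst e3; exact ⟨u, by simp, Or.inr ⟨hur, hw⟩⟩
                  have ht' : t ∈ A' := (hmemA' t).2 ⟨htA, e1, e2, e3⟩
                  rw [hA'eq] at ht'
                  simp only [Finset.mem_insert, Finset.mem_singleton] at ht'
                  rcases ht' with rfl | rfl
                  · exact ⟨w, by simp, Or.inr ⟨hwr, hp⟩⟩
                  · exact ⟨p, by simp, hTpq⟩
                · have hb1 : (insert p ({u, w} : Finset α)).card ≤ 3 := by
                    have h1 := Finset.card_insert_le p ({u, w} : Finset α)
                    have h2 : ({u, w} : Finset α).card ≤ 2 :=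
                      (Finset.card_insert_le _ _).trans (by simp)
                    omega
                  omega
        · -- cases (b-i) and (b-ii): w has another child x
          push_neg at honly
          obtain ⟨x, hxA, hxr, hpx, hxu⟩ := honly
          obtain ⟨_, hdx0⟩ := H1 x hxA hxr
          have hdx : dep x = dep w + 1 := by rw [hdx0, hpx]
          have hxv : x ≠ v := hdne x v (by omega)
          have hxw : x ≠ w := hdne x w (by omega)
          by_cases hleaf : ∀ c ∈ A, c ≠ r → par c ≠ x
          · -- (b-i): x is a childless child of w; delete v, u
            set A' := (A.erase v).erase u with hA'
            have hmemA' : ∀ t, t ∈ A' ↔ (t ∈ A ∧ t ≠ v ∧ t ≠ u) := by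
              intro t; simp only [hA', Finset.mem_erase]; tauto
            have hrA' : r ∈ A' := (hmemA' r).2 ⟨hr, Ne.symm hvr, Ne.symm hur⟩
            have hwA' : w ∈ A' := (hmemA' w).2 ⟨hwA, Ne.symm hvw, Ne.symm huw⟩
            have hxA' : x ∈ A' := (hmemA' x).2 ⟨hxA, hxv, hxu⟩
            have H1' : ∀ y ∈ A', y ≠ r → par y ∈ A' ∧ dep y = dep (par y) + 1 := by
              intro y hyA' hyr
              obtain ⟨hyA, hyv, hyu⟩ := (hmemA' y).1 hyA'
              obtain ⟨h1, h2⟩ := H1 y hyA hyr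
              refine ⟨(hmemA' _).2 ⟨h1, ?_, ?_⟩, h2⟩
              · intro hq; rw [hq] at h2; have := hmax y hyA; omega
              · intro hq; exact hyv (hchild_u y hyA hyr hq)
            have hc1 : (A.erase v).card = A.card - 1 := Finset.card_erase_of_mem hvA
            have hcA' : A'.card = A.card - 2 := by
              rw [hA', Finset.card_erase_of_mem (Finset.mem_erase.2 ⟨Ne.symm hvu, huA⟩)]
              omega
            by_cases h3' : 3 ≤ A'.card
            · obtain ⟨S', hS'sub, hS'dom, hS'b⟩ := ih A' (by omega) hrA' H1' h3'
              obtain ⟨s, hsS', hts⟩ := hS'dom x hxA'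
              have hwS' : w ∈ S' := by
                rcases hts with ⟨_, h⟩ | ⟨hsr, h⟩
                · rw [← hpx, ← h]; exact hsS'
                · exfalso
                  exact hleaf s ((hmemA' s).1 (hS'sub hsS')).1 hsr h.symm
              refine ⟨insert u S', ?_, ?_, ?_⟩
              · intro t ht
                rcases Finset.mem_insert.1 ht with rfl | ht; · exact huA
                exact ((hmemA' t).1 (hS'sub ht)).1
              · intro t htA
                by_cases e1 : t = v
                · subst e1; exact ⟨u, by simp, Or.inl ⟨hvr, hu⟩⟩
                by_cases e2 : t = u
                · subst e2
                  exact ⟨w, Finset.mem_insert_of_mem hwS', Or.inl ⟨hur, hw⟩⟩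
                obtain ⟨s', hs', hts'⟩ := hS'dom t ((hmemA' t).2 ⟨htA, e1, e2⟩)
                exact ⟨s', Finset.mem_insert_of_mem hs', hts'⟩
              · have := Finset.card_insert_le u S'
                omega
            · -- A' = {w, x} and w = r
              have hwx : w ≠ x := Ne.symm hxw
              have hsub : ({w, x} : Finset α) ⊆ A' := by
                intro t ht; simp only [Finset.mem_insert, Finset.mem_singleton] at ht
                rcases ht with rfl | rfl; exacts [hwA', hxA']
              have hcwx : ({w, x} : Finset α).card = 2 := by
                rw [Finset.card_insert_of_notMem (by simp [hwx]), Finset.card_singleton]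
              have hcA2 : A'.card = 2 := by
                have := Finset.card_le_card hsub; omega
              have hA'eq : A' = {w, x} :=
                (Finset.eq_of_subset_of_card_le hsub (by omega)).symm
              have hwr : w = r := by
                by_contra hwr
                obtain ⟨hq1, hq2⟩ := H1' w hwA' hwr
                rw [hA'eq] at hq1
                simp only [Finset.mem_insert, Finset.mem_singleton] at hq1
                rcases hq1 with h | h
                · rw [h] at hq2; omega
                · rw [h] at hq2; omega
              refine ⟨{w, u}, ?_, ?_, ?_⟩
              · intro t ht; simp only [Finset.mem_insert, Finset.mem_singleton] at ht
                rcases ht with rfl | rfl; exacts [hwA, huA]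
              · intro t htA
                by_cases e1 : t = v
                · subst e1; exact ⟨u, by simp, Or.inl ⟨hvr, hu⟩⟩
                by_cases e2 : t = u
                · subst e2; exact ⟨w, by simp, Or.inl ⟨hur, hw⟩⟩
                have ht' : t ∈ A' := (hmemA' t).2 ⟨htA, e1, e2⟩
                rw [hA'eq] at ht'
                simp only [Finset.mem_insert, Finset.mem_singleton] at ht'
                rcases ht' with rfl | rfl
                · exact ⟨u, by simp, Or.inr ⟨hur, hw⟩⟩
                · exact ⟨w, by simp, Or.inl ⟨hxr, hpx.symm⟩⟩
              · have : ({w, u} : Finset α).card ≤ 2 :=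
                  (Finset.card_insert_le _ _).trans (by simp)
                omega
          · -- (b-ii): x has a child y; delete v, u, y
            push_neg at hleaf
            obtain ⟨y, hyA, hyr, hpy⟩ := hleaf
            obtain ⟨_, hdy0⟩ := H1 y hyA hyr
            have hdy : dep y = dep x + 1 := by rw [hdy0, hpy]
            have hchild_x : ∀ c ∈ A, c ≠ r → par c = x → c = y := by
              intro c hc hcr hpc
              by_contra hne
              obtain ⟨_, h2⟩ := H1 c hc hcr
              exact hsib c hc y hyA hcr hyr hne (hpc.trans hpy.symm)
                (show dep c = dep v by rw [h2, hpc]; omega)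
            have hyv : y ≠ v := by
              intro h; exact hxu (by rw [← hpy, h])
            have hyu : y ≠ u := hdne y u (by omega)
            have hyw : y ≠ w := hdne y w (by omega)
            have hyx : y ≠ x := hdne y x (by omega)
            set A' := ((A.erase v).erase u).erase y with hA'
            have hmemA' : ∀ t, t ∈ A' ↔ (t ∈ A ∧ t ≠ v ∧ t ≠ u ∧ t ≠ y) := by
              intro t; simp only [hA', Finset.mem_erase]; tauto
            have hrA' : r ∈ A' := (hmemA' r).2 ⟨hr, Ne.symm hvr, Ne.symm hur, Ne.symm hyr⟩
            have hwA' : w ∈ A' := (hmemA' w).2 ⟨hwA, Ne.symm hvw, Ne.symm huw, Ne.symm hyw⟩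
            have hxA' : x ∈ A' := (hmemA' x).2 ⟨hxA, hxv, hxu, Ne.symm hyx⟩
            have H1' : ∀ t ∈ A', t ≠ r → par t ∈ A' ∧ dep t = dep (par t) + 1 := by
              intro t htA' htr
              obtain ⟨htA, htv, htu, hty⟩ := (hmemA' t).1 htA'
              obtain ⟨h1, h2⟩ := H1 t htA htr
              refine ⟨(hmemA' _).2 ⟨h1, ?_, ?_, ?_⟩, h2⟩
              · intro hq; rw [hq] at h2; have := hmax t htA; omega
              · intro hq; exact htv (hchild_u t htA htr hq)
              · intro hq; rw [hq] at h2; have := hmax t htA; omega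
            have hc1 : (A.erase v).card = A.card - 1 := Finset.card_erase_of_mem hvA
            have hc2 : ((A.erase v).erase u).card = A.card - 2 := by
              rw [Finset.card_erase_of_mem (Finset.mem_erase.2 ⟨Ne.symm hvu, huA⟩)]; omega
            have hcA' : A'.card = A.card - 3 := by
              rw [hA', Finset.card_erase_of_mem (Finset.mem_erase.2
                ⟨hyu, Finset.mem_erase.2 ⟨hyv, hyA⟩⟩)]
              omega
            by_cases h3' : 3 ≤ A'.card
            · obtain ⟨S', hS'sub, hS'dom, hS'b⟩ := ih A' (by omega) hrA' H1' h3'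
              obtain ⟨s, hsS', hts⟩ := hS'dom x hxA'
              have hwS' : w ∈ S' := by
                rcases hts with ⟨_, h⟩ | ⟨hsr, h⟩
                · rw [← hpx, ← h]; exact hsS'
                · exfalso
                  have hsmem := (hmemA' s).1 (hS'sub hsS')
                  exact hsmem.2.2.2 (hchild_x s hsmem.1 hsr h.symm)
              refine ⟨insert u (insert x S'), ?_, ?_, ?_⟩
              · intro t ht
                rcases Finset.mem_insert.1 ht with rfl | ht; · exact huA
                rcases Finset.mem_insert.1 ht with rfl | ht; · exact hxA
                exact ((hmemA' t).1 (hS'sub ht)).1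
              · intro t htA
                by_cases e1 : t = v
                · subst e1; exact ⟨u, by simp, Or.inl ⟨hvr, hu⟩⟩
                by_cases e2 : t = u
                · subst e2
                  exact ⟨w, Finset.mem_insert_of_mem (Finset.mem_insert_of_mem hwS'),
                    Or.inl ⟨hur, hw⟩⟩
                by_cases e3 : t = y
                · subst e3
                  exact ⟨x, Finset.mem_insert_of_mem (Finset.mem_insert_self x S'),
                    Or.inl ⟨hyr, hpy.symm⟩⟩
                obtain ⟨s', hs', hts'⟩ := hS'dom t ((hmemA' t).2 ⟨htA, e1, e2, e3⟩)
                exact ⟨s', Finset.mem_insert_of_mem (Finset.mem_insert_of_mem hs'), hts'⟩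
              · have hb1 : (insert u (insert x S')).card ≤ S'.card + 2 := by
                  have := Finset.card_insert_le u (insert x S')
                  have := Finset.card_insert_le x S'
                  omega
                omega
            · -- A' = {w, x}, w = r, |A| = 5
              have hwx : w ≠ x := Ne.symm hxw
              have hsub : ({w, x} : Finset α) ⊆ A' := by
                intro t ht; simp only [Finset.mem_insert, Finset.mem_singleton] at ht
                rcases ht with rfl | rfl; exacts [hwA', hxA']
              have hcwx : ({w, x} : Finset α).card = 2 := by
                rw [Finset.card_insert_of_notMem (by simp [hwx]), Finset.card_singleton]
              have hcA2 : A'.card = 2 := by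
                have := Finset.card_le_card hsub; omega
              have hA'eq : A' = {w, x} :=
                (Finset.eq_of_subset_of_card_le hsub (by omega)).symm
              have hwr : w = r := by
                by_contra hwr
                obtain ⟨hq1, hq2⟩ := H1' w hwA' hwr
                rw [hA'eq] at hq1
                simp only [Finset.mem_insert, Finset.mem_singleton] at hq1
                rcases hq1 with h | h
                · rw [h] at hq2; omega
                · rw [h] at hq2; omega
              refine ⟨insert u ({w, x} : Finset α), ?_, ?_, ?_⟩
              · intro t ht
                simp only [Finset.mem_insert, Finset.mem_singleton] at ht
                rcases ht with rfl | rfl | rfl; exacts [huA, hwA, hxA]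
              · intro t htA
                by_cases e1 : t = v
                · subst e1; exact ⟨u, by simp, Or.inl ⟨hvr, hu⟩⟩
                by_cases e2 : t = u
                · subst e2; exact ⟨w, by simp, Or.inl ⟨hur, hw⟩⟩
                by_cases e3 : t = y
                · subst e3; exact ⟨x, by simp, Or.inl ⟨hyr, hpy.symm⟩⟩
                have ht' : t ∈ A' := (hmemA' t).2 ⟨htA, e1, e2, e3⟩
                rw [hA'eq] at ht'
                simp only [Finset.mem_insert, Finset.mem_singleton] at ht'
                rcases ht' with rfl | rfl
                · exact ⟨u, by simp, Or.inr ⟨hur, hw⟩⟩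
                · exact ⟨w, by simp, Or.inl ⟨hxr, hpx.symm⟩⟩
              · have hb1 : (insert u ({w, x} : Finset α)).card ≤ 3 := by
                  have := Finset.card_insert_le u ({w, x} : Finset α)
                  omega
                omega
    · -- shallow case: depth at most 1, r dominates everything
      have hkey : ∀ t ∈ A, t ≠ r → par t = r := by
        intro t ht htr
        obtain ⟨h1, h2⟩ := H1 t ht htr
        by_contra hptr
        obtain ⟨_, h4⟩ := H1 (par t) h1 hptr
        have := hmax t ht; omega
      have hex : ∃ c ∈ A, c ≠ r := by
        by_contra h; push_neg at h
        have hsub : A ⊆ {r} := fun t ht => Finset.mem_singleton.2 (h t ht)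
        have := Finset.card_le_card hsub
        simp only [Finset.card_singleton] at this; omega
      obtain ⟨c, hcA, hcr⟩ := hex
      refine ⟨{r, c}, ?_, ?_, ?_⟩
      · intro t ht; simp only [Finset.mem_insert, Finset.mem_singleton] at ht
        rcases ht with rfl | rfl; exacts [hr, hcA]
      · intro t htA
        by_cases htr : t = r
        · subst htr; exact ⟨c, by simp, Or.inr ⟨hcr, (hkey c hcA hcr).symm⟩⟩
        · exact ⟨r, by simp, Or.inl ⟨htr, (hkey t htA htr).symm⟩⟩
      · have : ({r, c} : Finset α).card ≤ 2 := (Finset.card_insert_le _ _).trans (by simp)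
        omega

/-- Every connected graph of order at least 3 has a total dominating set `S`
with `3|S| ≤ 2n`. -/
lemma exists_tds [Fintype α] (G : SimpleGraph α) (hconn : G.Connected)
    (h3 : 3 ≤ Fintype.card α) :
    ∃ S : Finset α, (∀ v, ∃ u ∈ S, G.Adj u v) ∧ 3 * S.card ≤ 2 * Fintype.card α := by
  classical
  have hne : Nonempty α := Fintype.card_pos_iff.1 (by omega)
  obtain ⟨r⟩ := hne
  have hpar : ∀ v, v ≠ r → ∃ u, G.Adj u v ∧ G.dist r v = G.dist r u + 1 := by
    intro v hvr
    obtain ⟨p, hp⟩ := (hconn r v).exists_walk_length_eq_dist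
    obtain ⟨y, hadj, q, hq⟩ := SimpleGraph.Walk.exists_eq_cons_of_ne hvr p.reverse
    refine ⟨y, hadj.symm, ?_⟩
    have h1 : G.dist r y ≤ q.reverse.length := SimpleGraph.dist_le _
    have h2 : q.reverse.length = q.length := SimpleGraph.Walk.length_reverse _
    have h3' : p.reverse.length = q.length + 1 := by
      rw [hq, SimpleGraph.Walk.length_cons]
    have h4 : p.reverse.length = p.length := SimpleGraph.Walk.length_reverse _
    have h5 : G.dist r v ≤ G.dist r y + G.dist y v := hconn.dist_triangle
    have h6 : G.dist y v ≤ 1 := by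
      have := SimpleGraph.dist_le hadj.symm.toWalk
      simpa using this
    omega
  have hchoice : ∀ v, ∃ u, v ≠ r → G.Adj u v ∧ G.dist r v = G.dist r u + 1 := by
    intro v
    by_cases h : v = r
    · exact ⟨r, fun hc => absurd h hc⟩
    · obtain ⟨u, hu⟩ := hpar v h
      exact ⟨u, fun _ => hu⟩
  choose par hparspec using hchoice
  obtain ⟨S, hSsub, hSdom, hSb⟩ := tds_aux r par (G.dist r) (SimpleGraph.dist_self)
    (Fintype.card α) Finset.univ (by rw [Finset.card_univ]) (Finset.mem_univ r)
    (fun v _ hvr => ⟨Finset.mem_univ _, (hparspec v hvr).2⟩)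
    (by rw [Finset.card_univ]; exact h3)
  refine ⟨S, ?_, by rwa [Finset.card_univ] at hSb⟩
  intro v
  obtain ⟨s, hsS, hts⟩ := hSdom v (Finset.mem_univ v)
  rcases hts with ⟨hvr, h⟩ | ⟨hsr, h⟩
  · refine ⟨s, hsS, ?_⟩
    rw [h]; exact (hparspec v hvr).1
  · refine ⟨s, hsS, ?_⟩
    exact (show G.Adj v s by rw [h]; exact (hparspec s hsr).1).symm

end TotalDomination

/-- For any connected graph `G` of order `n ≥ 3` and any graph `H`,
`γ_r(G∘H) ≤ 2·⌊2n/3⌋`. -/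
theorem weakRoman_lexProd_le_two_mul_twoThirds {α β : Type*} [Fintype α] [Fintype β]
    (G : SimpleGraph α) (H : SimpleGraph β) (n : ℕ)
    (hcard : Fintype.card α = n) (hn : 3 ≤ n) (hconn : G.Connected) :
    weakRomanNumber (lexProd G H) ≤ 2 * (2 * n / 3) := by
  classical
  subst hcard
  by_cases hβ : Nonempty β
  · obtain ⟨b⟩ := hβ
    obtain ⟨S, hSdom, hSb⟩ := exists_tds G hconn hn
    set f : α × β → ℕ := fun p => if p.1 ∈ S ∧ p.2 = b then 2 else 0 with hf
    have hfval : ∀ a y, f (a, y) = if a ∈ S ∧ y = b then 2 else 0 := fun a y => rfl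
    have hsum : ∑ v, f v = 2 * S.card := by
      rw [Fintype.sum_prod_type]
      have hrow : ∀ a : α, (∑ y : β, f (a, y)) = if a ∈ S then 2 else 0 := by
        intro a
        by_cases ha : a ∈ S
        · simp only [hfval, ha, true_and, if_pos]
          rw [Finset.sum_ite_eq' Finset.univ b (fun _ => 2)]
          simp
        · simp [hfval, ha]
      rw [Finset.sum_congr rfl (fun a _ => hrow a), Finset.sum_ite_mem]
      simp [Finset.sum_const, mul_comm]
    have hwrdf : IsWRDF (lexProd G H) f := by
      constructor
      · intro v; rw [hf]; dsimp only; split <;> omega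
      · intro v hv0
        obtain ⟨s, hsS, hadj⟩ := hSdom v.1
        have hfs : f (s, b) = 2 := by simp [hfval, hsS]
        refine ⟨(s, b), Or.inl hadj, by omega, ?_⟩
        intro p hp
        obtain ⟨t, htS, htadj⟩ := hSdom p.1
        have hadjpt : (lexProd G H).Adj p (t, b) := Or.inl htadj.symm
        have hz := hp.2 (t, b) hadjpt
        simp only [Function.update_apply] at hz
        by_cases h1 : (t, b) = (s, b)
        · rw [if_pos h1, hfs] at hz
          omega
        · rw [if_neg h1] at hz
          by_cases h2 : (t, b) = v
          · rw [if_pos h2] at hz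
            exact one_ne_zero hz
          · rw [if_neg h2] at hz
            have hft : f (t, b) = 2 := by simp [hfval, htS]
            rw [hft] at hz
            omega
    have hmem : 2 * S.card ∈ {k | ∃ f : α × β → ℕ,
        IsWRDF (lexProd G H) f ∧ ∑ v, f v = k} := ⟨f, hwrdf, hsum⟩
    refine le_trans (Nat.sInf_le hmem) ?_
    have hdiv : S.card ≤ 2 * Fintype.card α / 3 :=
      (Nat.le_div_iff_mul_le (by norm_num)).2 (by omega)
    omega
  · have hempty : IsEmpty β := not_nonempty_iff.1 hβ
    have hempty2 : IsEmpty (α × β) := ⟨fun p => hempty.false p.2⟩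
    have h0 : (0 : ℕ) ∈ {k | ∃ f : α × β → ℕ,
        IsWRDF (lexProd G H) f ∧ ∑ v, f v = k} := by
      refine ⟨fun _ => 0, ⟨fun v => Nat.zero_le 2, fun v => (hempty2.false v).elim⟩, by simp⟩
    exact le_trans (Nat.sInf_le h0) (Nat.zero_le _)
end
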